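/- Let Σ be a finite commutative ring of size q, let s ≤ n, and let I, J ⊆ [n] be s-subsets whose increasing enumerations satisfy I(k) < J(k) for all k ∈ [s] (an observable pair). If x ∈ Σ^n is chosen uniformly at random, then the random variable u_{I,J} := x_I − x_J (coordinatewise subtraction of the restrictions of x to I and J, ordered increasingly) is uniformly distributed on Σ^s. -/

import Mathlib

private def gfun {S : Type*} [CommRing S] {n s : ℕ} (I J : Finset (Fin n))
    (hI : I.card = s) (hJ : J.card = s)
    (hobs : ∀ k : Fin s, (I.orderIsoOfFin hI k : Fin n) < (J.orderIsoOfFin hJ k : Fin n))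
    (v : Fin s → S) (i : Fin n) : S :=
  if h : i ∈ I then
    gfun I J hI hJ hobs v (J.orderIsoOfFin hJ ((I.orderIsoOfFin hI).symm ⟨i, h⟩))
      + v ((I.orderIsoOfFin hI).symm ⟨i, h⟩)
  else 0
termination_by n - i.val
decreasing_by
  have h2 := hobs ((I.orderIsoOfFin hI).symm ⟨i, h⟩)
  rw [OrderIso.apply_symm_apply] at h2
  have h3 : i.val < (J.orderIsoOfFin hJ ((I.orderIsoOfFin hI).symm ⟨i, h⟩) : Fin n).val := h2
  have h4 := (J.orderIsoOfFin hJ ((I.orderIsoOfFin hI).symm ⟨i, h⟩) : Fin n).isLt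
  omega

private lemma gfun_spec {S : Type*} [CommRing S] {n s : ℕ} (I J : Finset (Fin n))
    (hI : I.card = s) (hJ : J.card = s)
    (hobs : ∀ k : Fin s, (I.orderIsoOfFin hI k : Fin n) < (J.orderIsoOfFin hJ k : Fin n))
    (v : Fin s → S) (k : Fin s) :
    gfun I J hI hJ hobs v (I.orderIsoOfFin hI k) - gfun I J hI hJ hobs v (J.orderIsoOfFin hJ k)
      = v k := by
  have hmem : (I.orderIsoOfFin hI k : Fin n) ∈ I := (I.orderIsoOfFin hI k).2
  conv_lhs => rw [gfun]
  rw [dif_pos hmem]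
  have hk : (I.orderIsoOfFin hI).symm ⟨(I.orderIsoOfFin hI k : Fin n), hmem⟩ = k := by
    have he : (⟨(I.orderIsoOfFin hI k : Fin n), hmem⟩ : {x // x ∈ I}) = I.orderIsoOfFin hI k :=
      Subtype.ext rfl
    rw [he, OrderIso.symm_apply_apply]
  rw [hk]
  ring

/-- for an observable pair `(I, J)` of `s`-subsets of `[n]` and a
uniformly random `x : Σ^n`, the difference `u_{I,J} = x_I - x_J` is uniformly
distributed on `Σ^s`: every value `v` is attained by exactly `q^n / q^s` strings. -/
theorem stmt5 {S : Type*} [Fintype S] [CommRing S] [DecidableEq S]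
    (n s : ℕ) (hs : s ≤ n) (I J : Finset (Fin n))
    (hI : I.card = s) (hJ : J.card = s)
    (hobs : ∀ k : Fin s, (I.orderIsoOfFin hI k : Fin n) < (J.orderIsoOfFin hJ k : Fin n))
    (v : Fin s → S) :
    (Finset.univ.filter (fun x : Fin n → S =>
        (fun k : Fin s => x (I.orderIsoOfFin hI k) - x (J.orderIsoOfFin hJ k)) = v)).card
      * (Fintype.card S) ^ s = (Fintype.card S) ^ n := by
  set F : (Fin n → S) → (Fin s → S) :=
    fun x k => x (I.orderIsoOfFin hI k) - x (J.orderIsoOfFin hJ k) with hF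
  have key : ∀ w : Fin s → S,
      (Finset.univ.filter (fun x : Fin n → S => F x = w)).card
        = (Finset.univ.filter (fun x : Fin n → S => F x = v)).card := by
    intro w
    apply Finset.card_bij' (fun x _ => x + gfun I J hI hJ hobs (v - w))
      (fun x _ => x - gfun I J hI hJ hobs (v - w))
    · intro a ha
      simp only [Finset.mem_filter, Finset.mem_univ, true_and] at ha ⊢
      funext k
      have hg := gfun_spec I J hI hJ hobs (v - w) k
      simp only [Pi.sub_apply] at hg
      have ha' : a (I.orderIsoOfFin hI k) - a (J.orderIsoOfFin hJ k) = w k := congrFun ha k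
      show (a _ + gfun I J hI hJ hobs (v - w) _) - (a _ + gfun I J hI hJ hobs (v - w) _) = v k
      linear_combination ha' + hg
    · intro a ha
      simp only [Finset.mem_filter, Finset.mem_univ, true_and] at ha ⊢
      funext k
      have hg := gfun_spec I J hI hJ hobs (v - w) k
      simp only [Pi.sub_apply] at hg
      have ha' : a (I.orderIsoOfFin hI k) - a (J.orderIsoOfFin hJ k) = v k := congrFun ha k
      show (a _ - gfun I J hI hJ hobs (v - w) _) - (a _ - gfun I J hI hJ hobs (v - w) _) = w k
      linear_combination ha' - hg
    · intro a _; simp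
    · intro a _; simp
  have total : ∑ w : Fin s → S, (Finset.univ.filter (fun x : Fin n → S => F x = w)).card
      = Fintype.card (Fin n → S) := by
    rw [Fintype.card, Finset.card_eq_sum_card_fiberwise (f := F) (t := Finset.univ)
      (fun x _ => Finset.mem_univ _)]
  have hmain : (Fintype.card (Fin s → S)) *
      (Finset.univ.filter (fun x : Fin n → S => F x = v)).card = Fintype.card (Fin n → S) := by
    rw [← total, Fintype.card, Finset.sum_congr rfl (fun w _ => key w), Finset.sum_const,
      smul_eq_mul]
  rw [Fintype.card_fun, Fintype.card_fun, Fintype.card_fin, Fintype.card_fin, mul_comm] at hmain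
  convert hmain
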